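/- Let M be a nonzero comultiplication R-module and N a submodule of M. Then N is a large (essential) submodule of M if and only if Soc(M) ⊆ N. -/
import Mathlib


/-- `M` is a comultiplication `R`-module: every submodule is of the form `(0 :_M I)`. -/
def IsComultiplication (R M : Type*) [CommRing R] [AddCommGroup M] [Module R M] : Prop :=
  ∀ N : Submodule R M, ∃ I : Ideal R, ∀ m : M, m ∈ N ↔ ∀ r ∈ I, r • m = 0

/-- A submodule is large (essential) if it meets every nonzero submodule nontrivially. -/
def IsLarge {R M : Type*} [CommRing R] [AddCommGroup M] [Module R M]
    (N : Submodule R M) : Prop :=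
  ∀ L : Submodule R M, L ≠ ⊥ → N ⊓ L ≠ ⊥

/-- In a comultiplication module, every nonzero submodule contains an atom. -/
theorem exists_atom_le_of_comul {R M : Type*} [CommRing R] [AddCommGroup M] [Module R M]
    (hc : IsComultiplication R M) (L : Submodule R M) (hL : L ≠ ⊥) :
    ∃ S : Submodule R M, IsAtom S ∧ S ≤ L := by
  obtain ⟨m, hmL, hm0⟩ := (Submodule.ne_bot_iff L).mp hL
  -- a maximal ideal containing the annihilator of m
  have hA : (Submodule.span R {m}).annihilator ≠ ⊤ := by
    intro h
    have h1 : (1 : R) ∈ (Submodule.span R {m}).annihilator := h ▸ Submodule.mem_top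
    have := Submodule.mem_annihilator.mp h1 m (Submodule.mem_span_singleton_self m)
    simp at this
    exact hm0 this
  obtain ⟨P, hPmax, hAP⟩ := Ideal.exists_le_maximal _ hA
  -- Nakayama for the cyclic module: m ∉ P • Rm
  have hmPm : m ∉ P • Submodule.span R {m} := by
    intro h
    obtain ⟨r, hrP, hr⟩ := Submodule.mem_smul_span_singleton.mp h
    have h1r : (1 - r) ∈ P := by
      apply hAP
      rw [Submodule.mem_annihilator_span_singleton]
      rw [sub_smul, one_smul, hr, sub_self]
    have : (1 : R) ∈ P := by
      have := P.add_mem h1r hrP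
      simpa using this
    exact hPmax.ne_top (Ideal.eq_top_iff_one P |>.mpr this)
  -- comultiplication: P • Rm = (0 : I)
  obtain ⟨I, hI⟩ := hc (P • Submodule.span R {m})
  have : ¬ ∀ r ∈ I, r • m = 0 := fun h => hmPm ((hI m).mpr h)
  push_neg at this
  obtain ⟨r, hrI, hrm⟩ := this
  set s := r • m with hs
  have hsL : s ∈ L := L.smul_mem r hmL
  have hPs : ∀ p ∈ P, p • s = 0 := by
    intro p hp
    have hpm : p • m ∈ P • Submodule.span R {m} :=
      Submodule.mem_smul_span_singleton.mpr ⟨p, hp, rfl⟩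
    have := (hI (p • m)).mp hpm r hrI
    rw [hs, smul_comm]
    exact this
  refine ⟨Submodule.span R {s}, ⟨?_, ?_⟩, ?_⟩
  · -- span{s} ≠ ⊥
    simpa [Submodule.span_singleton_eq_bot] using hrm
  · -- minimality
    intro T hT
    by_contra hTbot
    obtain ⟨t, htT, ht0⟩ := (Submodule.ne_bot_iff T).mp hTbot
    obtain ⟨c, hc'⟩ := Submodule.mem_span_singleton.mp (hT.le htT)
    have hcP : c ∉ P := by
      intro hcP
      exact ht0 (hc' ▸ hPs c hcP)
    obtain ⟨y, i, hiP, hyi⟩ := hPmax.exists_inv hcP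
    have : s ∈ T := by
      have : s = y • t + i • s := by
        rw [← hc', smul_smul, ← add_smul]
        rw [hyi, one_smul]
      rw [this]
      exact T.add_mem (T.smul_mem y htT) (by rw [hPs i hiP]; exact T.zero_mem)
    exact absurd (Submodule.span_le.mpr (Set.singleton_subset_iff.mpr this)) hT.not_ge
  · exact Submodule.span_le.mpr (Set.singleton_subset_iff.mpr hsL)

/-- In a nonzero comultiplication module, a submodule is large iff it contains the socle. -/
theorem stmt1 {R M : Type*} [CommRing R] [AddCommGroup M] [Module R M]
    [Nontrivial M] (hc : IsComultiplication R M) (N : Submodule R M) :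
    IsLarge N ↔ sSup {S : Submodule R M | IsAtom S} ≤ N := by
  constructor
  · intro hN
    apply sSup_le
    intro S hS
    have h1 : N ⊓ S ≠ ⊥ := hN S hS.1
    have h2 : N ⊓ S ≤ S := inf_le_right
    rcases h2.lt_or_eq with h | h
    · exact absurd (hS.2 _ h) h1
    · exact h ▸ inf_le_left
  · intro hsoc L hL
    obtain ⟨S, hS, hSL⟩ := exists_atom_le_of_comul hc L hL
    have : S ≤ N := le_trans (le_sSup (Set.mem_setOf.mpr hS)) hsoc
    intro h
    exact hS.1 (le_bot_iff.mp (h ▸ le_inf this hSL))
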